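/- Let n ≥ 3 and i ∈ {0,1,2} (indices mod 3). Suppose x̃, ỹ ∈ V_{n−1} \ V_{n−2} are distinct and F_i(x̃), F_i(ỹ) ∉ D^{i+1}_n ∪ D^{i−1}_n, where D^j_n is the set of four n-neighbors in V_n of x_j = (q_{j−1} + q_{j+1})/2. Then the conductances of the sets V_n \ V_{n−1} (computed at level n) and V_{n−1} \ V_{n−2} (computed at level n−1) satisfy c^{V_n \backslash V_{n−1}}_{F_i(x̃), F_i(ỹ)} = (5/3) · c^{V_{n−1} \backslash V_{n−2}}_{x̃, ỹ}. -/

import Mathlib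

open scoped BigOperators

noncomputable section

namespace SGPaper

/-- The three corners of the Sierpinski gasket:
`q₀ = (1/2, √3/2)`, `q₁ = (0,0)`, `q₂ = (1,0)`. -/
def q : Fin 3 → ℝ × ℝ
  | 0 => (1 / 2, Real.sqrt 3 / 2)
  | 1 => (0, 0)
  | 2 => (1, 0)

/-- The contraction map towards corner `i`: `F_i(x) = (x + q_i)/2`. -/
def Fmap (i : Fin 3) (x : ℝ × ℝ) : ℝ × ℝ := (2⁻¹ : ℝ) • (x + q i)

/-- `Fword w = F_{w₁} ∘ ⋯ ∘ F_{w_m}` for the word `w = w₁⋯w_m`. -/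
def Fword (w : List (Fin 3)) : ℝ × ℝ → ℝ × ℝ :=
  w.foldr (fun i f => Fmap i ∘ f) id

/-- The level-`m` vertex set of the Sierpinski gasket:
`V_m = ⋃_{|w| = m} F_w({q₀, q₁, q₂})`. -/
def V (m : ℕ) : Set (ℝ × ℝ) :=
  {x | ∃ w : List (Fin 3), w.length = m ∧ ∃ i : Fin 3, x = Fword w (q i)}

/-- `x` and `y` are `m`-neighbors: they are distinct and belong to a common
level-`m` cell `F_w({q₀, q₁, q₂})`. -/
def Nbr (m : ℕ) (x y : ℝ × ℝ) : Prop :=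
  x ≠ y ∧ ∃ w : List (Fin 3), w.length = m ∧
    (∃ i : Fin 3, x = Fword w (q i)) ∧ (∃ j : Fin 3, y = Fword w (q j))

/-- The value `(u x - u y)²` on the unordered pair `{x, y}`. -/
def edgeVal (u : ℝ × ℝ → ℝ) : Sym2 (ℝ × ℝ) → ℝ :=
  Sym2.lift ⟨fun x y => (u x - u y) ^ 2, fun _ _ => by ring⟩

/-- The unordered pair `e` is an edge of the level-`m` graph `Γ_m`. -/
def IsEdge (m : ℕ) (e : Sym2 (ℝ × ℝ)) : Prop :=
  ∃ x y : ℝ × ℝ, Nbr m x y ∧ e = s(x, y)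

/-- The level-`m` graph energy: `E_m(u) = (5/3)^m Σ (u x − u y)²`, the sum being over
unordered `m`-neighbor pairs `{x, y}` (a finite set, so `tsum` is the honest sum). -/
def Energy (m : ℕ) (u : ℝ × ℝ → ℝ) : ℝ :=
  (5 / 3 : ℝ) ^ m * ∑' e : {e : Sym2 (ℝ × ℝ) // IsEdge m e}, edgeVal u e

/-- `Q_E(v)`: minimal level-`m` energy among functions `u : V_m → ℝ` agreeing
with `v` on `E` (the minimum is attained, so it equals this infimum). -/
def Q (m : ℕ) (E : Set (ℝ × ℝ)) (v : ℝ × ℝ → ℝ) : ℝ :=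
  sInf {r | ∃ u : ℝ × ℝ → ℝ, (∀ x ∈ E, u x = v x) ∧ r = Energy m u}

/-- Indicator function of the point `z`. -/
def ind (z : ℝ × ℝ) : ℝ × ℝ → ℝ := fun t => if t = z then 1 else 0

/-- The conductance `c^E_{x,y} = (Q_E(𝟙_x) + Q_E(𝟙_y) − Q_E(𝟙_x + 𝟙_y))/2`
between `x, y ∈ E`, computed at level `m`. -/
def cond (m : ℕ) (E : Set (ℝ × ℝ)) (x y : ℝ × ℝ) : ℝ :=
  (Q m E (ind x) + Q m E (ind y) - Q m E (ind x + ind y)) / 2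

/-- `x_i = (q_{i−1} + q_{i+1})/2`, the midpoint opposite `q_i` (element of `V₁ \ V₀`). -/
def xmid (i : Fin 3) : ℝ × ℝ := (2⁻¹ : ℝ) • (q (i - 1) + q (i + 1))

/-- `D^i_n`: the set of `n`-neighbors in `V_n` of the midpoint `x_i`. -/
def Dset (n : ℕ) (i : Fin 3) : Set (ℝ × ℝ) := {y | y ∈ V n ∧ Nbr n y (xmid i)}

/-! ### Barycentric coordinates -/

def bary : Fin 3 → ℝ × ℝ → ℝ
  | 0 => fun p => 2 * p.2 / Real.sqrt 3
  | 1 => fun p => 1 - p.1 - p.2 / Real.sqrt 3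
  | 2 => fun p => p.1 - p.2 / Real.sqrt 3

lemma sqrt3_ne : Real.sqrt 3 ≠ 0 := by positivity

lemma bary_sum (p : ℝ × ℝ) : bary 0 p + bary 1 p + bary 2 p = 1 := by
  simp only [bary]; ring

lemma bary_q (j k : Fin 3) : bary j (q k) = if j = k then 1 else 0 := by
  have h := sqrt3_ne
  fin_cases j <;> fin_cases k <;> simp [bary, q] <;> field_simp <;> ring

lemma bary_affine (j : Fin 3) (x y : ℝ × ℝ) :
    bary j ((2⁻¹ : ℝ) • (x + y)) = (bary j x + bary j y) / 2 := by
  fin_cases j <;>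
    simp only [bary, Prod.smul_fst, Prod.smul_snd, Prod.fst_add, Prod.snd_add,
      smul_eq_mul] <;> ring

lemma bary_Fmap (j i : Fin 3) (p : ℝ × ℝ) :
    bary j (Fmap i p) = (bary j p + if j = i then 1 else 0) / 2 := by
  rw [Fmap, bary_affine, bary_q]

lemma point_eq (p : ℝ × ℝ) :
    p = (bary 2 p + bary 0 p / 2, Real.sqrt 3 / 2 * bary 0 p) := by
  have h := sqrt3_ne
  obtain ⟨a, b⟩ := p
  simp only [bary, Prod.mk.injEq]
  constructor <;> field_simp <;> ring

lemma bary_ext {x y : ℝ × ℝ} (h0 : bary 0 x = bary 0 y) (h2 : bary 2 x = bary 2 y) :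
    x = y := by
  rw [point_eq x, point_eq y, h0, h2]

lemma eq_corner {x : ℝ × ℝ} {c : Fin 3} (hb : ∀ j, 0 ≤ bary j x) (hc : bary c x = 1) :
    x = q c := by
  have hs := bary_sum x
  have h0 := hb 0; have h1 := hb 1; have h2 := hb 2
  have hs := bary_sum x
  have h0 := hb 0; have h1 := hb 1; have h2 := hb 2
  have hc3 : ∀ d : Fin 3, d = 0 ∨ d = 1 ∨ d = 2 := by decide
  rcases hc3 c with rfl | rfl | rfl <;>
    apply bary_ext <;> rw [bary_q] <;> split_ifs with hif <;>
      first | exact absurd hif (by decide) | linarith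

lemma eq_mid {x : ℝ × ℝ} {i j : Fin 3} (hij : i ≠ j) (hb : ∀ k, 0 ≤ bary k x)
    (hi : 1 / 2 ≤ bary i x) (hj : 1 / 2 ≤ bary j x) :
    x = (2⁻¹ : ℝ) • (q i + q j) := by
  have hs := bary_sum x
  have h0 := hb 0; have h1 := hb 1; have h2 := hb 2
  have hc3 : ∀ d : Fin 3, d = 0 ∨ d = 1 ∨ d = 2 := by decide
  rcases hc3 i with rfl | rfl | rfl <;> rcases hc3 j with rfl | rfl | rfl <;>
    first
      | exact absurd rfl hij
      | (apply bary_ext <;> rw [bary_affine, bary_q, bary_q] <;>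
          split_ifs with ha hb hc hd <;>
          first
            | exact absurd ha (by decide)
            | exact absurd hb (by decide)
            | exact absurd hc (by decide)
            | exact absurd hd (by decide)
            | exact absurd rfl ha
            | exact absurd rfl hb
            | exact absurd rfl hc
            | exact absurd rfl hd
            | linarith)

/-! ### Words and vertex sets -/

lemma Fword_cons (i : Fin 3) (w : List (Fin 3)) (x : ℝ × ℝ) :
    Fword (i :: w) x = Fmap i (Fword w x) := rfl

lemma fword_box : ∀ (w : List (Fin 3)) (a j : Fin 3),
    0 ≤ bary j (Fword w (q a)) ∧ bary j (Fword w (q a)) ≤ 1 := by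
  intro w
  induction w with
  | nil =>
      intro a j; simp only [Fword, List.foldr, id, bary_q]
      split <;> norm_num
  | cons i w ih =>
      intro a j
      rw [Fword_cons, bary_Fmap]
      rcases ih a j with ⟨hl, hr⟩
      split_ifs <;> constructor <;> linarith

lemma V_box {x : ℝ × ℝ} {m : ℕ} (h : x ∈ V m) (j : Fin 3) :
    0 ≤ bary j x ∧ bary j x ≤ 1 := by
  obtain ⟨w, -, a, rfl⟩ := h
  exact fword_box w a j

lemma fword_dyadic : ∀ (w : List (Fin 3)) (a j : Fin 3),
    ∃ k : ℤ, bary j (Fword w (q a)) = k / 2 ^ w.length := by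
  intro w
  induction w with
  | nil =>
      intro a j
      refine ⟨if j = a then 1 else 0, ?_⟩
      simp only [Fword, List.foldr, id, bary_q, List.length_nil, pow_zero]
      split <;> norm_num
  | cons i w ih =>
      intro a j
      obtain ⟨k, hk⟩ := ih a j
      refine ⟨k + if j = i then 2 ^ w.length else 0, ?_⟩
      rw [Fword_cons, bary_Fmap, hk, List.length_cons, pow_succ]
      have h2 : (2:ℝ) ^ w.length ≠ 0 := by positivity
      split_ifs <;> push_cast <;> field_simp <;> ring

lemma V_dyadic {x : ℝ × ℝ} {m : ℕ} (h : x ∈ V m) (j : Fin 3) :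
    ∃ k : ℤ, bary j x = k / 2 ^ m := by
  obtain ⟨w, hw, a, rfl⟩ := h
  rw [← hw]; exact fword_dyadic w a j

lemma Fmap_q (c : Fin 3) : Fmap c (q c) = q c := by
  rw [Fmap]
  have : q c + q c = (2:ℝ) • q c := (two_smul ℝ (q c)).symm
  rw [this, smul_smul]; norm_num

lemma q_mem_V (c : Fin 3) (m : ℕ) : q c ∈ V m := by
  refine ⟨List.replicate m c, List.length_replicate, c, ?_⟩
  induction m with
  | zero => rfl
  | succ m ih => rw [List.replicate_succ, Fword_cons, ← ih, Fmap_q]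

lemma Fmap_inj (i : Fin 3) : Function.Injective (Fmap i) := by
  intro x y h
  have h2 := smul_right_injective (ℝ × ℝ) (by norm_num : (2⁻¹:ℝ) ≠ 0) h
  exact add_right_cancel h2

def gmap (i : Fin 3) (z : ℝ × ℝ) : ℝ × ℝ := (2:ℝ) • z - q i

lemma Fmap_gmap (i : Fin 3) (z : ℝ × ℝ) : Fmap i (gmap i z) = z := by
  rw [Fmap, gmap, sub_add_cancel, smul_smul]; norm_num

lemma gmap_Fmap (i : Fin 3) (x : ℝ × ℝ) : gmap i (Fmap i x) = x := by
  rw [Fmap, gmap, smul_smul]; norm_num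

lemma Nbr_symm {m : ℕ} {x y : ℝ × ℝ} (h : Nbr m x y) : Nbr m y x := by
  obtain ⟨hne, w, hw, ha, hb⟩ := h
  exact ⟨hne.symm, w, hw, hb, ha⟩

lemma nbr_map {m : ℕ} (i : Fin 3) {x y : ℝ × ℝ} (h : Nbr m x y) :
    Nbr (m + 1) (Fmap i x) (Fmap i y) := by
  obtain ⟨hne, w, hw, ⟨a, ha⟩, ⟨b, hb⟩⟩ := h
  exact ⟨fun h' => hne (Fmap_inj i h'), i :: w, by simp [hw],
    ⟨a, by rw [Fword_cons, ha]⟩, ⟨b, by rw [Fword_cons, hb]⟩⟩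

lemma mem_V_succ {m : ℕ} (i : Fin 3) {x : ℝ × ℝ} (h : x ∈ V m) :
    Fmap i x ∈ V (m + 1) := by
  obtain ⟨w, hw, a, rfl⟩ := h
  exact ⟨i :: w, by simp [hw], a, rfl⟩

lemma cell_glue {i j : Fin 3} (hij : i ≠ j) {p y : ℝ × ℝ}
    (hp : ∀ k, 0 ≤ bary k p) (hy : ∀ k, 0 ≤ bary k y)
    (h : Fmap i p = Fmap j y) : p = q j := by
  have h1 : 1 / 2 ≤ bary i (Fmap i p) := by
    rw [bary_Fmap, if_pos rfl]; linarith [hp i]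
  have h2 : 1 / 2 ≤ bary j (Fmap i p) := by
    rw [h, bary_Fmap, if_pos rfl]; linarith [hy j]
  have h3 : ∀ k, 0 ≤ bary k (Fmap i p) := by
    intro k; rw [bary_Fmap]; split_ifs <;> linarith [hp k]
  have hm : Fmap i p = (2⁻¹ : ℝ) • (q i + q j) := eq_mid hij h3 h1 h2
  have : Fmap i p = Fmap i (q j) := by rw [hm, Fmap, add_comm]
  exact Fmap_inj i this

lemma Vdown {i : Fin 3} {x : ℝ × ℝ} {m : ℕ} (hb : ∀ j, 0 ≤ bary j x)
    (h : Fmap i x ∈ V (m + 1)) : x ∈ V m := by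
  obtain ⟨w, hw, a, ha⟩ := h
  cases w with
  | nil => simp at hw
  | cons c w' =>
      have hw' : w'.length = m := by simpa using hw
      rw [Fword_cons] at ha
      by_cases hci : c = i
      · subst hci
        exact ⟨w', hw', a, Fmap_inj c ha⟩
      · have hglue : x = q c :=
          cell_glue (fun h' => hci h'.symm) hb
            (fun k => (fword_box w' a k).1) ha
        rw [hglue]; exact q_mem_V c m

lemma fword_eq_corner {w : List (Fin 3)} {b c : Fin 3}
    (hw : Fword w (q b) = q c) (a : Fin 3) :
    bary c (Fword w (q a)) = 1 - (1 - bary c (q a)) / 2 ^ w.length := by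
  induction w with
  | nil => simp only [Fword, List.foldr, id, List.length_nil, pow_zero]; ring
  | cons i w ih =>
      rw [Fword_cons] at hw
      have h1 : bary c (Fmap i (Fword w (q b))) = 1 := by rw [hw, bary_q, if_pos rfl]
      rw [bary_Fmap] at h1
      have hbox := fword_box w b c
      have hic : c = i := by
        by_contra hne
        rw [if_neg hne] at h1
        linarith [hbox.2]
      rw [if_pos hic] at h1
      have hin : bary c (Fword w (q b)) = 1 := by linarith
      have hcor : Fword w (q b) = q c :=
        eq_corner (fun k => (fword_box w b k).1) hin
      have hih := ih hcor
      rw [Fword_cons, bary_Fmap, if_pos hic, hih, List.length_cons, pow_succ]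
      have h2 : (2:ℝ) ^ w.length ≠ 0 := by positivity
      field_simp; ring

lemma nbr_corner {m : ℕ} {x : ℝ × ℝ} {c : Fin 3} (h : Nbr (m + 1) x (q c)) :
    x ∈ V (m + 1) \ V m := by
  obtain ⟨hne, w, hw, ⟨a, ha⟩, ⟨b, hb⟩⟩ := h
  refine ⟨⟨w, hw, a, ha⟩, fun hV => ?_⟩
  have hf := fword_eq_corner hb.symm a
  rw [← ha, hw] at hf
  have haq : bary c (q a) = 0 := by
    rw [bary_q]
    split_ifs with hca
    · exfalso
      apply hne
      rw [bary_q, if_pos hca] at hf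
      have hb1 : bary c x = 1 := by rw [hf]; ring
      exact eq_corner (fun k => (V_box ⟨w, hw, a, ha⟩ k).1) hb1
    · rfl
  rw [haq] at hf
  obtain ⟨k, hk⟩ := V_dyadic hV c
  rw [hk] at hf
  have h2 : (2:ℝ) ^ m ≠ 0 := by positivity
  have key : (2 * k : ℝ) = 2 ^ (m + 1) - 1 := by
    have hf' : (2 * k : ℝ) * 2 ^ m = (2 ^ (m + 1) - 1) * 2 ^ m := by
      rw [pow_succ]
      field_simp at hf
      linear_combination hf
    exact mul_right_cancel₀ h2 hf'
  have keyZ : (2 * k : ℤ) = 2 ^ (m + 1) - 1 := by exact_mod_cast key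
  have hdvd : (2:ℤ) ∣ 2 ^ (m + 1) := dvd_pow_self 2 (Nat.succ_ne_zero m)
  omega

/-! ### Edges and energy -/

lemma edge_finite (m : ℕ) : {e : Sym2 (ℝ × ℝ) | IsEdge m e}.Finite := by
  have h1 : ({l : List (Fin 3) | l.length = m} ×ˢ
      (Set.univ : Set (Fin 3 × Fin 3))).Finite :=
    Set.Finite.prod (List.finite_length_eq _ m) Set.finite_univ
  refine (h1.image (fun t : List (Fin 3) × Fin 3 × Fin 3 =>
    s(Fword t.1 (q t.2.1), Fword t.1 (q t.2.2)))).subset ?_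
  rintro e ⟨x, y, ⟨hne, w, hw, ⟨a, rfl⟩, ⟨b, rfl⟩⟩, rfl⟩
  exact ⟨(w, a, b), ⟨hw, Set.mem_univ _⟩, rfl⟩

def EdgeFin (m : ℕ) : Finset (Sym2 (ℝ × ℝ)) := (edge_finite m).toFinset

lemma mem_EdgeFin {m : ℕ} {e : Sym2 (ℝ × ℝ)} : e ∈ EdgeFin m ↔ IsEdge m e :=
  (edge_finite m).mem_toFinset

lemma edgeVal_mk (u : ℝ × ℝ → ℝ) (x y : ℝ × ℝ) :
    edgeVal u s(x, y) = (u x - u y) ^ 2 := rfl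

lemma edgeVal_nonneg (u : ℝ × ℝ → ℝ) (e : Sym2 (ℝ × ℝ)) : 0 ≤ edgeVal u e := by
  induction e using Sym2.ind with
  | _ x y => rw [edgeVal_mk]; positivity

lemma edgeVal_map (f : ℝ × ℝ → ℝ × ℝ) (u : ℝ × ℝ → ℝ) (e : Sym2 (ℝ × ℝ)) :
    edgeVal u (Sym2.map f e) = edgeVal (u ∘ f) e := by
  induction e using Sym2.ind with
  | _ x y => rw [Sym2.map_pair_eq, edgeVal_mk]; rfl

lemma energy_eq (m : ℕ) (u : ℝ × ℝ → ℝ) :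
    Energy m u = (5 / 3 : ℝ) ^ m * ∑ e ∈ EdgeFin m, edgeVal u e := by
  classical
  unfold Energy
  congr 1
  have hts := tsum_subtype {e : Sym2 (ℝ × ℝ) | IsEdge m e} (edgeVal u)
  rw [show (∑' (e : { e // IsEdge m e }), edgeVal u ↑e)
      = ∑' (x : ↑{e : Sym2 (ℝ × ℝ) | IsEdge m e}), edgeVal u ↑x from rfl, hts]
  rw [tsum_eq_sum (s := EdgeFin m)
    (f := Set.indicator {e : Sym2 (ℝ × ℝ) | IsEdge m e} (edgeVal u))
    (by
      intro e he
      rw [Set.indicator_apply, if_neg]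
      simpa [mem_EdgeFin] using he)]
  refine Finset.sum_congr rfl ?_
  intro e he
  rw [Set.indicator_apply, if_pos (by simpa [mem_EdgeFin] using he)]

lemma energy_nonneg (m : ℕ) (u : ℝ × ℝ → ℝ) : 0 ≤ Energy m u := by
  rw [energy_eq]
  have h1 : (0:ℝ) ≤ (5/3:ℝ) ^ m := by positivity
  exact mul_nonneg h1 (Finset.sum_nonneg fun e _ => edgeVal_nonneg u e)

lemma energy_congr {m : ℕ} {u u' : ℝ × ℝ → ℝ} (h : ∀ x ∈ V m, u x = u' x) :
    Energy m u = Energy m u' := by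
  rw [energy_eq, energy_eq]
  congr 1
  refine Finset.sum_congr rfl ?_
  intro e he
  obtain ⟨x, y, hnbr, rfl⟩ := mem_EdgeFin.mp he
  obtain ⟨hne, w, hw, ⟨a, ha⟩, ⟨b, hb⟩⟩ := hnbr
  rw [edgeVal_mk, edgeVal_mk, h x ⟨w, hw, a, ha⟩, h y ⟨w, hw, b, hb⟩]

lemma isEdge_map {m : ℕ} (i : Fin 3) {e : Sym2 (ℝ × ℝ)} (h : IsEdge m e) :
    IsEdge (m + 1) (Sym2.map (Fmap i) e) := by
  obtain ⟨x, y, hnbr, rfl⟩ := h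
  exact ⟨Fmap i x, Fmap i y, nbr_map i hnbr, by rw [Sym2.map_pair_eq]⟩

lemma image_subset_EdgeFin (m : ℕ) (i : Fin 3) :
    (EdgeFin m).image (Sym2.map (Fmap i)) ⊆ EdgeFin (m + 1) := by
  intro e he
  obtain ⟨e', he', rfl⟩ := Finset.mem_image.mp he
  exact mem_EdgeFin.mpr (isEdge_map i (mem_EdgeFin.mp he'))

lemma sum_image_eq (m : ℕ) (i : Fin 3) (u : ℝ × ℝ → ℝ) :
    ∑ e ∈ (EdgeFin m).image (Sym2.map (Fmap i)), edgeVal u e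
      = ∑ e ∈ EdgeFin m, edgeVal (u ∘ Fmap i) e := by
  rw [Finset.sum_image (fun a _ b _ h => Sym2.map.injective (Fmap_inj i) h)]
  exact Finset.sum_congr rfl fun e _ => edgeVal_map _ u e

lemma energy_pull (m : ℕ) (i : Fin 3) (u : ℝ × ℝ → ℝ) :
    5 / 3 * Energy m (u ∘ Fmap i) ≤ Energy (m + 1) u := by
  rw [energy_eq, energy_eq]
  have h1 : ∑ e ∈ (EdgeFin m).image (Sym2.map (Fmap i)), edgeVal u e
      ≤ ∑ e ∈ EdgeFin (m + 1), edgeVal u e :=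
    Finset.sum_le_sum_of_subset_of_nonneg (image_subset_EdgeFin m i)
      (fun e _ _ => edgeVal_nonneg u e)
  rw [sum_image_eq] at h1
  have h2 : (0:ℝ) ≤ (5/3:ℝ) ^ (m+1) := by positivity
  calc 5 / 3 * ((5/3:ℝ) ^ m * ∑ e ∈ EdgeFin m, edgeVal (u ∘ Fmap i) e)
      = (5/3:ℝ) ^ (m+1) * ∑ e ∈ EdgeFin m, edgeVal (u ∘ Fmap i) e := by
        rw [pow_succ]; ring
    _ ≤ (5/3:ℝ) ^ (m+1) * ∑ e ∈ EdgeFin (m+1), edgeVal u e := by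
        apply mul_le_mul_of_nonneg_left _ h2
        linarith
    _ = _ := rfl

lemma energy_push (m : ℕ) (i : Fin 3) (U : ℝ × ℝ → ℝ)
    (h : ∀ e, IsEdge (m + 1) e →
      e ∈ (EdgeFin m).image (Sym2.map (Fmap i)) ∨ edgeVal U e = 0) :
    Energy (m + 1) U = 5 / 3 * Energy m (U ∘ Fmap i) := by
  rw [energy_eq, energy_eq]
  have hsub : ∑ e ∈ (EdgeFin m).image (Sym2.map (Fmap i)), edgeVal U e
      = ∑ e ∈ EdgeFin (m + 1), edgeVal U e :=
    Finset.sum_subset (image_subset_EdgeFin m i)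
      (fun e he hne => (h e (mem_EdgeFin.mp he)).resolve_left hne)
  rw [← hsub, sum_image_eq, pow_succ]
  ring

/-! ### Q basics -/

lemma Q_le {m : ℕ} {E : Set (ℝ × ℝ)} {v u : ℝ × ℝ → ℝ}
    (hu : ∀ x ∈ E, u x = v x) : Q m E v ≤ Energy m u := by
  apply csInf_le
  · exact ⟨0, by rintro r ⟨u', -, rfl⟩; exact energy_nonneg m u'⟩
  · exact ⟨u, hu, rfl⟩

lemma le_Q {m : ℕ} {E : Set (ℝ × ℝ)} {v : ℝ × ℝ → ℝ} {c : ℝ}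
    (h : ∀ u : ℝ × ℝ → ℝ, (∀ x ∈ E, u x = v x) → c ≤ Energy m u) :
    c ≤ Q m E v := by
  apply le_csInf
  · exact ⟨Energy m v, v, fun x _ => rfl, rfl⟩
  · rintro r ⟨u, hu, rfl⟩; exact h u hu

/-! ### Fin 3 facts -/

lemma fin3_cases {c i : Fin 3} (h : c ≠ i) : c = i + 1 ∨ c = i - 1 :=
  (by decide : ∀ c i : Fin 3, c ≠ i → c = i + 1 ∨ c = i - 1) c i h

lemma Fq_mid_plus (i : Fin 3) : Fmap i (q (i + 1)) = xmid (i - 1) := by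
  have h1 : ∀ j : Fin 3, (j - 1) - 1 = j + 1 := by decide
  have h2 : ∀ j : Fin 3, (j - 1) + 1 = j := by decide
  rw [xmid, h1, h2, Fmap]

lemma Fq_mid_minus (i : Fin 3) : Fmap i (q (i - 1)) = xmid (i + 1) := by
  have h1 : ∀ j : Fin 3, (j + 1) - 1 = j := by decide
  have h2 : ∀ j : Fin 3, (j + 1) + 1 = j - 1 := by decide
  rw [xmid, h1, h2, Fmap, add_comm]

/-! ### The key scaling identity -/

lemma Qkey (m : ℕ) (i : Fin 3) (v vh : ℝ × ℝ → ℝ)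
    (hv1 : ∀ p ∈ V (m+1) \ V m, vh (Fmap i p) = v p)
    (hv2 : ∀ z ∈ V (m+2) \ V (m+1), (∀ p ∈ V (m+1), z ≠ Fmap i p) → vh z = 0)
    (hcor : ∀ y, (Nbr (m+1) y (q (i+1)) ∨ Nbr (m+1) y (q (i-1))) → v y = 0) :
    Q (m+2) (V (m+2) \ V (m+1)) vh = 5/3 * Q (m+1) (V (m+1) \ V m) v := by
  classical
  set E : Set (ℝ×ℝ) := V (m+2) \ V (m+1) with hE
  set E' : Set (ℝ×ℝ) := V (m+1) \ V m with hE'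
  have hEmap : ∀ p ∈ E', Fmap i p ∈ E := by
    intro p hp
    refine ⟨mem_V_succ i hp.1, fun hmem => hp.2 ?_⟩
    exact Vdown (fun j => (V_box hp.1 j).1) hmem
  have hA : ∀ u' : ℝ×ℝ → ℝ, (∀ x ∈ E', u' x = v x) →
      Q (m+2) E vh ≤ 5/3 * Energy (m+1) u' := by
    intro u' hu'
    set u0 : ℝ×ℝ → ℝ := fun t => if t = q (i+1) ∨ t = q (i-1) then 0 else u' t with hu0
    have hu0c : ∀ c : Fin 3, (c = i + 1 ∨ c = i - 1) → u0 (q c) = 0 := by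
      intro c hc
      rcases hc with rfl | rfl <;> simp [hu0]
    have hfeas0 : ∀ x ∈ E', u0 x = v x := by
      intro x hx
      simp only [hu0]
      rw [if_neg, hu' x hx]
      rintro (rfl | rfl) <;> exact hx.2 (q_mem_V _ _)
    have hkey : ∀ a b : ℝ×ℝ, Nbr (m+1) a b → (a = q (i+1) ∨ a = q (i-1)) →
        u0 a = 0 ∧ u0 b = 0 := by
      intro a b hab ha
      have hbc : Nbr (m+1) b (q (i+1)) ∨ Nbr (m+1) b (q (i-1)) := by
        rcases ha with rfl | rfl
        · exact Or.inl (Nbr_symm hab)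
        · exact Or.inr (Nbr_symm hab)
      have hbE' : b ∈ E' := by
        rcases hbc with h | h
        · exact nbr_corner h
        · exact nbr_corner h
      have hbnc : ¬(b = q (i+1) ∨ b = q (i-1)) := by
        rintro (rfl | rfl) <;> exact hbE'.2 (q_mem_V _ _)
      constructor
      · simp only [hu0]; rw [if_pos ha]
      · simp only [hu0]; rw [if_neg hbnc, hu' b hbE', hcor b hbc]
    have hEle : Energy (m+1) u0 ≤ Energy (m+1) u' := by
      rw [energy_eq, energy_eq]
      have hpow : (0:ℝ) ≤ (5/3:ℝ)^(m+1) := by positivity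
      refine mul_le_mul_of_nonneg_left ?_ hpow
      refine Finset.sum_le_sum ?_
      intro e he
      obtain ⟨x, y, hnbr, rfl⟩ := mem_EdgeFin.mp he
      rw [edgeVal_mk, edgeVal_mk]
      by_cases hx : x = q (i+1) ∨ x = q (i-1)
      · obtain ⟨h1, h2⟩ := hkey x y hnbr hx
        rw [h1, h2]
        simpa using sq_nonneg (u' x - u' y)
      · by_cases hy : y = q (i+1) ∨ y = q (i-1)
        · obtain ⟨h1, h2⟩ := hkey y x (Nbr_symm hnbr) hy
          rw [h1, h2]
          simpa using sq_nonneg (u' x - u' y)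
        · simp only [hu0]
          rw [if_neg hx, if_neg hy]
    set U : ℝ×ℝ → ℝ := fun z => if gmap i z ∈ V (m+1) then u0 (gmap i z) else 0 with hU
    have hUF : ∀ p ∈ V (m+1), U (Fmap i p) = u0 p := by
      intro p hp
      simp only [hU]
      rw [gmap_Fmap, if_pos hp]
    have hUfeas : ∀ z ∈ E, U z = vh z := by
      intro z hz
      by_cases hg : gmap i z ∈ V (m+1)
      · have hzf : z = Fmap i (gmap i z) := (Fmap_gmap i z).symm
        have hpE' : gmap i z ∈ E' := by
          refine ⟨hg, fun hV => hz.2 ?_⟩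
          have := mem_V_succ i hV
          rwa [← hzf] at this
        calc U z = u0 (gmap i z) := by simp only [hU]; rw [if_pos hg]
          _ = v (gmap i z) := hfeas0 _ hpE'
          _ = vh (Fmap i (gmap i z)) := (hv1 _ hpE').symm
          _ = vh z := by rw [← hzf]
      · have h0 : U z = 0 := by simp only [hU]; rw [if_neg hg]
        rw [h0]
        refine (hv2 z hz ?_).symm
        intro p hp heq
        apply hg
        rw [heq, gmap_Fmap]
        exact hp
    have hEU : Energy (m+2) U = 5/3 * Energy (m+1) (U ∘ Fmap i) := by
      apply energy_push
      intro e he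
      obtain ⟨x, y, hnbr, rfl⟩ := he
      obtain ⟨hne, w, hw, ⟨a, ha⟩, ⟨b, hb⟩⟩ := hnbr
      cases w with
      | nil => simp at hw
      | cons c w' =>
        have hw' : w'.length = m + 1 := by simpa using hw
        by_cases hci : c = i
        · subst hci
          left
          refine Finset.mem_image.mpr ⟨s(Fword w' (q a), Fword w' (q b)), ?_, ?_⟩
          · refine mem_EdgeFin.mpr ⟨_, _, ⟨?_, w', hw', ⟨a, rfl⟩, ⟨b, rfl⟩⟩, rfl⟩
            intro hxy
            apply hne
            rw [ha, hb, Fword_cons, Fword_cons, hxy]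
          · rw [Sym2.map_pair_eq, ha, hb, Fword_cons, Fword_cons]
        · right
          have hz : ∀ (t : ℝ×ℝ) (d : Fin 3), t = Fword (c :: w') (q d) → U t = 0 := by
            intro t d ht
            by_cases hg : gmap i t ∈ V (m+1)
            · have h1 : Fmap i (gmap i t) = Fmap c (Fword w' (q d)) := by
                rw [Fmap_gmap, ht, Fword_cons]
              have hpq : gmap i t = q c :=
                cell_glue (fun h' => hci h'.symm) (fun k => (V_box hg k).1)
                  (fun k => (fword_box w' d k).1) h1
              have hc2 : c = i + 1 ∨ c = i - 1 := fin3_cases hci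
              simp only [hU]
              rw [if_pos hg, hpq]
              exact hu0c c hc2
            · simp only [hU]; rw [if_neg hg]
          rw [edgeVal_mk, hz x a ha, hz y b hb]
          norm_num
    calc Q (m+2) E vh ≤ Energy (m+2) U := Q_le hUfeas
      _ = 5/3 * Energy (m+1) (U ∘ Fmap i) := hEU
      _ = 5/3 * Energy (m+1) u0 := by
          congr 1
          exact energy_congr (fun x hx => hUF x hx)
      _ ≤ 5/3 * Energy (m+1) u' := by linarith
  have hB : ∀ u : ℝ×ℝ → ℝ, (∀ x ∈ E, u x = vh x) →
      5/3 * Q (m+1) E' v ≤ Energy (m+2) u := by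
    intro u hu
    have hfeas : ∀ p ∈ E', (u ∘ Fmap i) p = v p := by
      intro p hp
      calc (u ∘ Fmap i) p = vh (Fmap i p) := hu _ (hEmap p hp)
        _ = v p := hv1 p hp
    calc 5/3 * Q (m+1) E' v ≤ 5/3 * Energy (m+1) (u ∘ Fmap i) := by
          have := Q_le (m := m+1) (E := E') (v := v) hfeas
          linarith
      _ ≤ Energy (m+2) u := energy_pull (m+1) i u
  apply le_antisymm
  · have h1 : 3/5 * Q (m+2) E vh ≤ Q (m+1) E' v := by
      apply le_Q
      intro u' hu'
      have := hA u' hu'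
      linarith
    linarith
  · exact le_Q hB


/-- For `n ≥ 3`, distinct `x̃, ỹ ∈ V_{n−1} \ V_{n−2}` with
`F_i(x̃), F_i(ỹ) ∉ D^{i+1}_n ∪ D^{i−1}_n`:
`c^{V_n \ V_{n−1}}_{F_i x̃, F_i ỹ} = (5/3) c^{V_{n−1} \ V_{n−2}}_{x̃, ỹ}`. -/
theorem stmt9 (n : ℕ) (hn : 3 ≤ n) (i : Fin 3) (xt yt : ℝ × ℝ)
    (hx : xt ∈ V (n - 1) \ V (n - 2)) (hy : yt ∈ V (n - 1) \ V (n - 2)) (hxy : xt ≠ yt)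
    (hxD : Fmap i xt ∉ Dset n (i + 1) ∪ Dset n (i - 1))
    (hyD : Fmap i yt ∉ Dset n (i + 1) ∪ Dset n (i - 1)) :
    cond n (V n \ V (n - 1)) (Fmap i xt) (Fmap i yt) =
      5 / 3 * cond (n - 1) (V (n - 1) \ V (n - 2)) xt yt := by
  obtain ⟨k, rfl⟩ := Nat.exists_eq_add_of_le hn
  have e1 : 3 + k - 1 = (k + 1) + 1 := by omega
  have e2 : 3 + k - 2 = k + 1 := by omega
  have e3 : 3 + k = (k + 1) + 2 := by omega
  rw [e1, e2] at hx hy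
  rw [e3] at hxD hyD
  rw [e1, e2, e3]
  set m := k + 1 with hm
  -- corner non-adjacency facts
  have hxcor : ∀ hh : Nbr (m+1) xt (q (i+1)) ∨ Nbr (m+1) xt (q (i-1)), False := by
    rintro (h | h)
    · apply hxD
      right
      refine ⟨mem_V_succ i hx.1, ?_⟩
      have := nbr_map i h
      rwa [Fq_mid_plus] at this
    · apply hxD
      left
      refine ⟨mem_V_succ i hx.1, ?_⟩
      have := nbr_map i h
      rwa [Fq_mid_minus] at this
  have hycor : ∀ hh : Nbr (m+1) yt (q (i+1)) ∨ Nbr (m+1) yt (q (i-1)), False := by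
    rintro (h | h)
    · apply hyD
      right
      refine ⟨mem_V_succ i hy.1, ?_⟩
      have := nbr_map i h
      rwa [Fq_mid_plus] at this
    · apply hyD
      left
      refine ⟨mem_V_succ i hy.1, ?_⟩
      have := nbr_map i h
      rwa [Fq_mid_minus] at this
  have h1 : Q (m+2) (V (m+2) \ V (m+1)) (ind (Fmap i xt))
      = 5/3 * Q (m+1) (V (m+1) \ V m) (ind xt) := by
    refine Qkey m i _ _ ?_ ?_ ?_
    · intro p _
      by_cases h : p = xt
      · subst h; simp [ind]
      · simp only [ind]
        rw [if_neg (fun hh => h (Fmap_inj i hh)), if_neg h]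
    · intro z _ h
      simp only [ind]
      rw [if_neg (h xt hx.1)]
    · intro y hy'
      simp only [ind]
      rw [if_neg]
      rintro rfl
      exact hxcor hy'
  have h2 : Q (m+2) (V (m+2) \ V (m+1)) (ind (Fmap i yt))
      = 5/3 * Q (m+1) (V (m+1) \ V m) (ind yt) := by
    refine Qkey m i _ _ ?_ ?_ ?_
    · intro p _
      by_cases h : p = yt
      · subst h; simp [ind]
      · simp only [ind]
        rw [if_neg (fun hh => h (Fmap_inj i hh)), if_neg h]
    · intro z _ h
      simp only [ind]
      rw [if_neg (h yt hy.1)]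
    · intro y hy'
      simp only [ind]
      rw [if_neg]
      rintro rfl
      exact hycor hy'
  have h3 : Q (m+2) (V (m+2) \ V (m+1)) (ind (Fmap i xt) + ind (Fmap i yt))
      = 5/3 * Q (m+1) (V (m+1) \ V m) (ind xt + ind yt) := by
    refine Qkey m i _ _ ?_ ?_ ?_
    · intro p _
      simp only [Pi.add_apply, ind]
      congr 1
      · by_cases h : p = xt
        · subst h; simp
        · rw [if_neg (fun hh => h (Fmap_inj i hh)), if_neg h]
      · by_cases h : p = yt
        · subst h; simp
        · rw [if_neg (fun hh => h (Fmap_inj i hh)), if_neg h]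
    · intro z _ h
      simp only [Pi.add_apply, ind]
      rw [if_neg (h xt hx.1), if_neg (h yt hy.1)]
      norm_num
    · intro y hy'
      simp only [Pi.add_apply, ind]
      rw [if_neg, if_neg]
      · norm_num
      · rintro rfl
        exact hycor hy'
      · rintro rfl
        exact hxcor hy'
  unfold cond
  rw [h1, h2, h3]
  ring


end SGPaper
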